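/- Under the two-groups model with zero assumptions A3 and A4, suppose (πₙ) are random variables with πₙ → π₀ in probability, π₀ ∈ (0,1], and (F̄ₙ), (Ḡₙ) are sequences of random functions with F̄ₙ(t) → F(t) and Ḡₙ(t) → G(t) in probability for each fixed t ∈ ℝ. Define F̂₀ₙ(t) = F̄ₙ(t)/πₙ for t ≤ μ₀ and F̂₀ₙ(t) = 1 − Ḡₙ(t)/πₙ for t > μ₀. Then for every t ∈ ℝ, F̂₀ₙ(t) → F₀(t) in probability. -/

import Mathlib

open MeasureTheory Filter

lemma tendsto_prob_comb {Ω : Type*} [MeasurableSpace Ω] (μ : Measure Ω)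
    (f g : ℕ → Ω → ℝ) (a b : ℝ)
    (hf : ∀ δ : ℝ, 0 < δ → Tendsto (fun n => μ {ω | δ < |f n ω - a|}) atTop (nhds 0))
    (hg : ∀ δ : ℝ, 0 < δ → Tendsto (fun n => μ {ω | δ < |g n ω - b|}) atTop (nhds 0))
    (h : ℝ → ℝ → ℝ) (hc : ContinuousAt (fun p : ℝ × ℝ => h p.1 p.2) (a, b)) :
    ∀ δ : ℝ, 0 < δ →
      Tendsto (fun n => μ {ω | δ < |h (f n ω) (g n ω) - h a b|}) atTop (nhds 0) := by
  intro δ hδ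
  rw [Metric.continuousAt_iff] at hc
  obtain ⟨η, hη, hcont⟩ := hc δ hδ
  have hsub : ∀ n, {ω | δ < |h (f n ω) (g n ω) - h a b|} ⊆
      {ω | η/2 < |f n ω - a|} ∪ {ω | η/2 < |g n ω - b|} := by
    intro n ω hω
    simp only [Set.mem_setOf_eq] at hω
    by_contra hcon
    simp only [Set.mem_union, Set.mem_setOf_eq, not_or, not_lt] at hcon
    obtain ⟨h1, h2⟩ := hcon
    have hd : dist ((f n ω, g n ω) : ℝ × ℝ) (a, b) < η := by
      rw [Prod.dist_eq, max_lt_iff]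
      constructor <;> · rw [Real.dist_eq]; linarith
    have := hcont hd
    rw [Real.dist_eq] at this
    linarith
  have hbound : ∀ n, μ {ω | δ < |h (f n ω) (g n ω) - h a b|} ≤
      μ {ω | η/2 < |f n ω - a|} + μ {ω | η/2 < |g n ω - b|} :=
    fun n => (measure_mono (hsub n)).trans (measure_union_le _ _)
  have hlim := (hf (η/2) (by linarith)).add (hg (η/2) (by linarith))
  rw [add_zero] at hlim
  exact tendsto_of_tendsto_of_tendsto_of_le_of_le tendsto_const_nhds hlim
    (fun n => zero_le) hbound

/-- Under the two-groups model with zero assumptions A3 and A4, if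
`πₙ → π₀` in probability with `π₀ ∈ (0,1]` and `F̄ₙ(t) → F(t)`, `Ḡₙ(t) → G(t)` in
probability pointwise, then the empirical null estimator
`F̂₀ₙ(t) = F̄ₙ(t)/πₙ` for `t ≤ μ₀`, `F̂₀ₙ(t) = 1 − Ḡₙ(t)/πₙ` for `t > μ₀`,
converges pointwise in probability to `F₀(t)`. -/
theorem empirical_null_cdf_consistent
    {Ω : Type*} [MeasurableSpace Ω] (μ : Measure Ω) [IsProbabilityMeasure μ]
    (π₀ : ℝ) (hπ₀pos : 0 < π₀) (hπ₀le : π₀ ≤ 1)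
    (F₀ F₁ G₁ : ℝ → ℝ) (μ₀ : ℝ)
    (hF₀mono : Monotone F₀) (hF₀range : ∀ t, 0 ≤ F₀ t ∧ F₀ t ≤ 1)
    (hF₁mono : Monotone F₁) (hF₁range : ∀ t, 0 ≤ F₁ t ∧ F₁ t ≤ 1)
    (hG₁anti : Antitone G₁) (hG₁range : ∀ t, 0 ≤ G₁ t ∧ G₁ t ≤ 1)
    (hmed : F₀ μ₀ = 1 / 2)
    (hmed_above : ∀ t, μ₀ < t → 1 / 2 < F₀ t)
    (hmed_below : ∀ t, t < μ₀ → F₀ t < 1 / 2)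
    (hA3 : ∀ t, t ≤ μ₀ → F₁ t = 0)
    (hA4 : ∀ t, μ₀ ≤ t → G₁ t = 0)
    (F G : ℝ → ℝ)
    (hF : ∀ t, F t = π₀ * F₀ t + (1 - π₀) * F₁ t)
    (hG : ∀ t, G t = π₀ * (1 - F₀ t) + (1 - π₀) * G₁ t)
    (πn : ℕ → Ω → ℝ)
    (hπconv : ∀ δ : ℝ, 0 < δ →
      Tendsto (fun n => μ {ω | δ < |πn n ω - π₀|}) atTop (nhds 0))
    (Fbar Gbar : ℕ → Ω → ℝ → ℝ)
    (hFconv : ∀ t : ℝ, ∀ δ : ℝ, 0 < δ →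
      Tendsto (fun n => μ {ω | δ < |Fbar n ω t - F t|}) atTop (nhds 0))
    (hGconv : ∀ t : ℝ, ∀ δ : ℝ, 0 < δ →
      Tendsto (fun n => μ {ω | δ < |Gbar n ω t - G t|}) atTop (nhds 0))
    (F₀hat : ℕ → Ω → ℝ → ℝ)
    (hF₀hat : ∀ n ω t, F₀hat n ω t =
      if t ≤ μ₀ then Fbar n ω t / πn n ω else 1 - Gbar n ω t / πn n ω) :
    ∀ t : ℝ, ∀ δ : ℝ, 0 < δ →
      Tendsto (fun n => μ {ω | δ < |F₀hat n ω t - F₀ t|}) atTop (nhds 0) := by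
  intro t
  have hπ₀ne : π₀ ≠ 0 := ne_of_gt hπ₀pos
  by_cases ht : t ≤ μ₀
  · -- F t = π₀ * F₀ t
    have hFt : F t = π₀ * F₀ t := by rw [hF t, hA3 t ht]; ring
    have key := tendsto_prob_comb μ (fun n ω => Fbar n ω t) πn (F t) π₀
      (hFconv t) hπconv (fun x y => x / y)
      (ContinuousAt.div continuousAt_fst continuousAt_snd hπ₀ne)
    have heq : ∀ n ω, F₀hat n ω t - F₀ t = Fbar n ω t / πn n ω - F t / π₀ := by
      intro n ω
      rw [hF₀hat n ω t, if_pos ht, hFt]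
      field_simp
    intro δ hδ
    have := key δ hδ
    simpa only [heq] using this
  · push_neg at ht
    have hGt : G t = π₀ * (1 - F₀ t) := by rw [hG t, hA4 t ht.le]; ring
    have key := tendsto_prob_comb μ (fun n ω => Gbar n ω t) πn (G t) π₀
      (hGconv t) hπconv (fun x y => 1 - x / y)
      (continuousAt_const.sub (ContinuousAt.div continuousAt_fst continuousAt_snd hπ₀ne))
    have heq : ∀ n ω, F₀hat n ω t - F₀ t =
        (1 - Gbar n ω t / πn n ω) - (1 - G t / π₀) := by
      intro n ω
      rw [hF₀hat n ω t, if_neg (not_le.mpr ht), hGt]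
      field_simp
      ring
    intro δ hδ
    have := key δ hδ
    simpa only [heq] using this
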